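/- Let u₀ ∈ H¹(ℝ) be real-valued with xu₀ ∈ L²(ℝ) and let φ ∈ L²₊(ℝ) be an eigenfunction of L_{u₀} = D - T_{u₀} with negative eigenvalue λ. Then φ belongs to the domain of X*, i.e. the restriction of φ̂ to (0,∞) is in H¹(0,∞). -/

import Mathlib

open MeasureTheory Filter Set Topology Complex
open scoped ENNReal NNReal

noncomputable section

namespace EigenXstar

lemma eLpNorm_mul_le {f h : ℝ → ℂ} (hf : AEStronglyMeasurable f volume)
    (hh : AEStronglyMeasurable h volume) :
    eLpNorm (fun t => f t * h t) 1 volume ≤ eLpNorm f 2 volume * eLpNorm h 2 volume := by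
  have h1 : (1 : ℝ≥0∞)/1 = 1/2 + 1/2 := by
    rw [ENNReal.div_add_div_same]
    norm_num
    rw [ENNReal.div_self two_ne_zero ENNReal.ofNat_ne_top]
  haveI : ENNReal.HolderTriple 2 2 1 := ⟨by rw [ENNReal.inv_two_add_inv_two, inv_one]⟩
  have := MeasureTheory.eLpNorm_smul_le_mul_eLpNorm (μ := volume) hh hf
      (p := 2) (q := 2) (r := 1)
  simpa [smul_eq_mul, Pi.mul_def] using this

lemma integrable_mul {f h : ℝ → ℂ} (hf : MemLp f 2 volume) (hh : MemLp h 2 volume) :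
    Integrable (fun t => f t * h t) volume := by
  rw [← memLp_one_iff_integrable]
  refine ⟨hf.1.mul hh.1, ?_⟩
  exact lt_of_le_of_lt (eLpNorm_mul_le hf.1 hh.1) (ENNReal.mul_lt_top hf.2 hh.2)

lemma integral_norm_mul_le {f h : ℝ → ℂ} (hf : MemLp f 2 volume) (hh : MemLp h 2 volume) :
    ∫ η, ‖f η * h η‖ ≤ (eLpNorm f 2 volume).toReal * (eLpNorm h 2 volume).toReal := by
  have hint := integrable_mul hf hh
  calc ∫ η, ‖f η * h η‖ = (eLpNorm (fun t => f t * h t) 1 volume).toReal := by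
        rw [integral_norm_eq_lintegral_enorm hint.1, eLpNorm_one_eq_lintegral_enorm]
    _ ≤ ((eLpNorm f 2 volume) * (eLpNorm h 2 volume)).toReal := by
        apply ENNReal.toReal_mono (ENNReal.mul_ne_top hf.2.ne hh.2.ne)
        exact eLpNorm_mul_le hf.1 hh.1
    _ = _ := ENNReal.toReal_mul

lemma norm_integral_mul_le {f h : ℝ → ℂ} (hf : MemLp f 2 volume) (hh : MemLp h 2 volume) :
    ‖∫ η, f η * h η‖ ≤ (eLpNorm f 2 volume).toReal * (eLpNorm h 2 volume).toReal :=
  le_trans (norm_integral_le_integral_norm _) (integral_norm_mul_le hf hh)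

lemma memLp_translate {f : ℝ → ℂ} (hf : MemLp f 2 volume) (x : ℝ) :
    MemLp (fun η => f (x - η)) 2 volume :=
  hf.comp_measurePreserving (Measure.measurePreserving_sub_left volume x)

lemma eLpNorm_translate {f : ℝ → ℂ} (hf : AEStronglyMeasurable f volume) (x : ℝ) :
    eLpNorm (fun η => f (x - η)) 2 volume = eLpNorm f 2 volume :=
  eLpNorm_comp_measurePreserving hf (Measure.measurePreserving_sub_left volume x)

/-- Translation continuity in `L²` for continuous compactly supported functions. -/
lemma tendsto_translate_cc {φ : ℝ → ℂ} (hcont : Continuous φ) (hsupp : HasCompactSupport φ) :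
    Tendsto (fun h : ℝ => eLpNorm (fun t => φ (t + h) - φ t) 2 volume) (𝓝 0) (𝓝 0) := by
  obtain ⟨M, hM⟩ := hsupp.exists_bound_of_continuous hcont
  have hM0 : 0 ≤ M := le_trans (norm_nonneg _) (hM 0)
  set K : Set ℝ := Metric.cthickening 1 (tsupport φ) with hK
  have hKco : IsCompact K := hsupp.cthickening
  have hKm : MeasurableSet K := Metric.isClosed_cthickening.measurableSet
  have hzero : ∀ h : ℝ, |h| ≤ 1 → ∀ t, t ∉ K → φ (t + h) - φ t = 0 := by
    intro h hh t ht
    have h1 : φ t = 0 := by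
      by_contra hφ
      exact ht (Metric.self_subset_cthickening _ (subset_tsupport φ hφ))
    have h2 : φ (t + h) = 0 := by
      by_contra hφ
      refine ht (Metric.mem_cthickening_of_dist_le t (t + h) 1 _ (subset_tsupport φ hφ) ?_)
      simp [Real.dist_eq, abs_sub_comm]
      simpa [abs_neg] using hh
    simp [h1, h2]
  rw [tendsto_iff_seq_tendsto]
  intro u hu
  set v : ℕ → ℝ := fun n => if |u n| ≤ 1 then u n else 0 with hv
  have hv1 : ∀ n, |v n| ≤ 1 := by
    intro n; by_cases h : |u n| ≤ 1 <;> simp [hv, h]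
  have huv : ∀ᶠ n in atTop, u n = v n := by
    have h1 : ∀ᶠ n in atTop, |u n| ≤ 1 := by
      have : Metric.closedBall (0:ℝ) 1 ∈ 𝓝 (0:ℝ) := Metric.closedBall_mem_nhds _ one_pos
      filter_upwards [hu this] with n hn
      simpa [Real.dist_eq] using hn
    filter_upwards [h1] with n hn
    simp [hv, hn]
  have hvlim : Tendsto v atTop (𝓝 0) := hu.congr' huv
  set Lam : ℕ → ℝ≥0∞ := fun n => ∫⁻ t, (‖φ (t + v n) - φ t‖₊ : ℝ≥0∞) ^ (2:ℝ) with hLam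
  have hDCT : Tendsto Lam atTop (𝓝 0) := by
    have h0 : (0:ℝ≥0∞) = ∫⁻ _ : ℝ, (0:ℝ≥0∞) := by simp
    rw [hLam, h0]
    refine tendsto_lintegral_of_dominated_convergence
      (K.indicator fun _ => ENNReal.ofReal (2*M) ^ (2:ℝ)) (fun n => ?_) (fun n => ?_) ?_ ?_
    · exact ((((hcont.comp (continuous_id.add continuous_const)).sub
        hcont).measurable.nnnorm).coe_nnreal_ennreal).pow_const _
    · refine Eventually.of_forall fun t => ?_
      by_cases ht : t ∈ K
      · rw [indicator_of_mem ht]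
        refine ENNReal.rpow_le_rpow ?_ (by norm_num)
        rw [← enorm_eq_nnnorm, ← ofReal_norm]
        refine ENNReal.ofReal_le_ofReal ?_
        calc ‖φ (t + v n) - φ t‖ ≤ ‖φ (t + v n)‖ + ‖φ t‖ := norm_sub_le _ _
          _ ≤ M + M := add_le_add (hM _) (hM _)
          _ = 2 * M := by ring
      · show (‖φ (t + v n) - φ t‖₊ : ℝ≥0∞) ^ (2:ℝ) ≤ K.indicator (fun _ => ENNReal.ofReal (2*M) ^ (2:ℝ)) t
        rw [indicator_of_notMem ht, hzero (v n) (hv1 n) t ht]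
        simp [ENNReal.zero_rpow_of_pos]
    · rw [lintegral_indicator hKm]
      simp only [lintegral_const, Measure.restrict_apply_univ]
      exact (ENNReal.mul_lt_top (ENNReal.rpow_lt_top_of_nonneg (by norm_num)
        ENNReal.ofReal_ne_top) hKco.measure_lt_top).ne
    · refine Eventually.of_forall fun t => ?_
      have h1 : Tendsto (fun n => φ (t + v n) - φ t) atTop (𝓝 0) := by
        have h2 : Tendsto (fun n => t + v n) atTop (𝓝 t) := by
          simpa using tendsto_const_nhds.add hvlim
        have h3 := (hcont.tendsto t).comp h2
        have h4 : Tendsto (fun n => φ (t + v n) - φ t) atTop (𝓝 (φ t - φ t)) :=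
          h3.sub tendsto_const_nhds
        simpa using h4
      have h2 : Tendsto (fun n => (‖φ (t + v n) - φ t‖₊ : ℝ≥0∞)) atTop (𝓝 0) := by
        rw [← ENNReal.coe_zero, ENNReal.tendsto_coe]
        have := (continuous_nnnorm.tendsto (0:ℂ)).comp h1
        simpa [Function.comp_def] using this
      have h5 := ((ENNReal.continuous_rpow_const (y := (2:ℝ))).tendsto (0:ℝ≥0∞)).comp h2
      have h6 : ((0:ℝ≥0∞)) ^ (2:ℝ) = 0 := ENNReal.zero_rpow_of_pos (by norm_num)
      rw [h6] at h5
      exact h5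
  have main : Tendsto (fun n => eLpNorm (fun t => φ (t + v n) - φ t) 2 volume) atTop (𝓝 0) := by
    have heq : (fun n => eLpNorm (fun t => φ (t + v n) - φ t) 2 volume)
        = fun n => (Lam n) ^ ((1:ℝ)/2) := by
      funext n
      rw [hLam, eLpNorm_eq_lintegral_rpow_enorm_toReal two_ne_zero ENNReal.ofNat_ne_top]
      norm_num
      rfl
    rw [heq]
    have h5 := ((ENNReal.continuous_rpow_const (y := (1:ℝ)/2)).tendsto (0:ℝ≥0∞)).comp hDCT
    have h6 : ((0:ℝ≥0∞)) ^ ((1:ℝ)/2) = 0 := ENNReal.zero_rpow_of_pos (by norm_num)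
    rw [h6] at h5
    exact h5
  refine main.congr' ?_
  filter_upwards [huv] with n hn
  simp [Function.comp, ← hn]

/-- Translation continuity in `L²`. -/
lemma tendsto_translate {f : ℝ → ℂ} (hf : MemLp f 2 volume) :
    Tendsto (fun h : ℝ => eLpNorm (fun t => f (t + h) - f t) 2 volume) (𝓝 0) (𝓝 0) := by
  rw [ENNReal.tendsto_nhds_zero]
  intro ε hε
  have hε4 : (0:ℝ≥0∞) < ε / 4 := ENNReal.div_pos hε.ne' (by norm_num)
  obtain ⟨φ, φsupp, hφclose, φcont, _⟩ :=
    hf.exists_hasCompactSupport_eLpNorm_sub_le (p := 2) ENNReal.ofNat_ne_top hε4.ne'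
  have hev : ∀ᶠ h : ℝ in 𝓝 0, eLpNorm (fun t => φ (t + h) - φ t) 2 volume ≤ ε / 4 := by
    filter_upwards [tendsto_translate_cc φcont φsupp (Iio_mem_nhds hε4)] with h hh
    exact le_of_lt hh
  filter_upwards [hev] with h hh
  have m1 : AEStronglyMeasurable (fun t => f (t + h)) volume :=
    hf.1.comp_quasiMeasurePreserving (measurePreserving_add_right volume h).quasiMeasurePreserving
  have m2 : AEStronglyMeasurable (fun t => φ (t + h)) volume :=
    (φcont.comp (continuous_id.add continuous_const)).aestronglyMeasurable
  have mφ := φcont.aestronglyMeasurable (μ := volume)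
  have hsplit : (fun t => f (t + h) - f t)
      = fun t => (f (t+h) - φ (t+h)) + ((φ (t+h) - φ t) + (φ t - f t)) := by
    funext t; ring
  have e1 : eLpNorm (fun t => f (t+h) - φ (t+h)) 2 volume ≤ ε / 4 := by
    have : (fun t => f (t+h) - φ (t+h)) = ((f - φ) ∘ fun t => t + h) := rfl
    rw [this, eLpNorm_comp_measurePreserving (hf.1.sub mφ)
      (measurePreserving_add_right volume h)]
    exact hφclose
  have e3 : eLpNorm (fun t => φ t - f t) 2 volume ≤ ε / 4 := by
    have : (fun t => φ t - f t) = φ - f := rfl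
    rw [this, eLpNorm_sub_comm]
    exact hφclose
  calc eLpNorm (fun t => f (t + h) - f t) 2 volume
      ≤ eLpNorm (fun t => f (t+h) - φ (t+h)) 2 volume
        + eLpNorm (fun t => (φ (t+h) - φ t) + (φ t - f t)) 2 volume := by
        rw [hsplit]
        exact eLpNorm_add_le (m1.sub m2) ((m2.sub mφ).add (mφ.sub hf.1)) one_le_two
    _ ≤ eLpNorm (fun t => f (t+h) - φ (t+h)) 2 volume
        + (eLpNorm (fun t => φ (t+h) - φ t) 2 volume + eLpNorm (fun t => φ t - f t) 2 volume) := by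
        gcongr
        exact eLpNorm_add_le (m2.sub mφ) (mφ.sub hf.1) one_le_two
    _ ≤ ε/4 + (ε/4 + ε/4) := by gcongr
    _ ≤ ε/4 + (ε/4 + ε/4) + ε/4 := le_self_add
    _ = 4 * (ε/4) := by ring
    _ = ε := ENNReal.mul_div_cancel' (by norm_num) (by norm_num)

end EigenXstar

open EigenXstar

/-- Let `φ ∈ L²₊(ℝ)` be an eigenfunction of `L_{u₀} = D - T_{u₀}` with negative
eigenvalue `lam`, described on the Fourier side by `g = φ̂` (supported in
`[0,∞)`, square integrable), where the eigenvalue equation reads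
`(ξ - lam) g(ξ) = (1/2π) (û₀ * g)(ξ)` for `ξ > 0`.  Here `u₀ ∈ H¹` is
real-valued with `x u₀ ∈ L²`, so that `w = û₀ ∈ H¹(ℝ)` (with derivative `w'`).
Then `φ` belongs to the domain of `X*`: the restriction of `g` to `(0,∞)`
belongs to `H¹(0,∞)`. -/
theorem eigenfunction_mem_domain_Xstar
    (g w w' : ℝ → ℂ) (lam : ℝ) (hlam : lam < 0)
    (hg_supp : ∀ ξ ≤ (0 : ℝ), g ξ = 0)
    (hg_L2 : MemLp g 2 (volume : Measure ℝ))
    (hw_L2 : MemLp w 2 (volume : Measure ℝ))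
    (hw_deriv : ∀ ξ : ℝ, HasDerivAt w (w' ξ) ξ)
    (hw'_L2 : MemLp w' 2 (volume : Measure ℝ))
    (heigen : ∀ ξ ∈ Ioi (0 : ℝ),
      ((ξ : ℂ) - lam) * g ξ = (1 / (2 * Real.pi) : ℂ) * ∫ η : ℝ, w (ξ - η) * g η) :
    ∃ g' : ℝ → ℂ,
      (∀ ξ ∈ Ioi (0 : ℝ), HasDerivAt g (g' ξ) ξ) ∧
      MemLp g' 2 (volume.restrict (Ioi (0 : ℝ))) := by
  have hw'_meas : Measurable w' := by
    have : w' = deriv w := funext fun ξ => (hw_deriv ξ).deriv.symm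
    rw [this]; exact measurable_deriv w
  set c : ℂ := (1 / (2 * Real.pi) : ℂ) with hc
  set G : ℝ → ℂ := fun x => ∫ η, w' (x - η) * g η with hG
  set Fw : ℝ → ℂ := fun x => ∫ η, w (x - η) * g η with hFw
  set B' : ℝ := (eLpNorm w' 2 volume).toReal * (eLpNorm g 2 volume).toReal with hB'
  have hint' : ∀ x : ℝ, Integrable (fun η => w' (x - η) * g η) volume := fun x =>
    integrable_mul (memLp_translate hw'_L2 x) hg_L2
  have hintw : ∀ x : ℝ, Integrable (fun η => w (x - η) * g η) volume := fun x =>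
    integrable_mul (memLp_translate hw_L2 x) hg_L2
  have hGbound : ∀ x, ‖G x‖ ≤ B' := by
    intro x
    calc ‖G x‖ ≤ (eLpNorm (fun η => w' (x - η)) 2 volume).toReal
        * (eLpNorm g 2 volume).toReal := norm_integral_mul_le (memLp_translate hw'_L2 x) hg_L2
      _ = B' := by rw [hB', eLpNorm_translate hw'_meas.aestronglyMeasurable x]
  -- continuity of G
  have hGcont : Continuous G := by
    rw [continuous_iff_continuousAt]
    intro x₀
    have key : ∀ x : ℝ, ‖G x - G x₀‖
        ≤ (eLpNorm (fun t => w' (t + (x - x₀)) - w' t) 2 volume).toReal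
          * (eLpNorm g 2 volume).toReal := by
      intro x
      have hGsub : G x - G x₀ = ∫ η, (w' (x - η) - w' (x₀ - η)) * g η := by
        rw [hG]
        simp only
        rw [← integral_sub (hint' x) (hint' x₀)]
        congr 1; funext η; ring
      rw [hGsub]
      have hF2 : MemLp (fun η => w' (x - η) - w' (x₀ - η)) 2 volume :=
        (memLp_translate hw'_L2 x).sub (memLp_translate hw'_L2 x₀)
      refine le_trans (norm_integral_mul_le hF2 hg_L2) ?_
      have heq : eLpNorm (fun η => w' (x - η) - w' (x₀ - η)) 2 volume
          = eLpNorm (fun t => w' (t + (x - x₀)) - w' t) 2 volume := by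
        have hcomp : (fun η => w' (x - η) - w' (x₀ - η))
            = ((fun t => w' (t + (x - x₀)) - w' t) ∘ fun η => x₀ - η) := by
          funext η
          show w' (x - η) - w' (x₀ - η) = w' (x₀ - η + (x - x₀)) - w' (x₀ - η)
          rw [show x₀ - η + (x - x₀) = x - η from by ring]
        rw [hcomp]
        exact eLpNorm_comp_measurePreserving
          (((hw'_meas.comp (measurable_id.add_const _)).sub hw'_meas).aestronglyMeasurable)
          (Measure.measurePreserving_sub_left volume x₀)
      rw [heq]
    have h2 : Tendsto (fun x => (eLpNorm (fun t => w' (t + (x - x₀)) - w' t) 2 volume).toReal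
        * (eLpNorm g 2 volume).toReal) (𝓝 x₀) (𝓝 0) := by
      have hsub : Tendsto (fun x : ℝ => x - x₀) (𝓝 x₀) (𝓝 0) := by
        exact (continuous_id.sub (continuous_const (y := x₀))).tendsto' x₀ 0 (by simp)
      have hD := (tendsto_translate hw'_L2).comp hsub
      have := (ENNReal.tendsto_toReal (ENNReal.zero_ne_top)).comp hD
      simpa using this.mul_const _
    have hGt : Tendsto (fun x => G x - G x₀) (𝓝 x₀) (𝓝 0) := squeeze_zero_norm key h2
    have := hGt.add_const (G x₀)
    simpa [ContinuousAt] using this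
  -- representation of increments of Fw
  have hrep_le : ∀ a b : ℝ, a ≤ b → Fw b - Fw a = ∫ s in a..b, G s := by
    intro a b hab
    have hptw : ∀ η : ℝ, w (b - η) - w (a - η) = ∫ s in a..b, w' (s - η) := by
      intro η
      rw [intervalIntegral.integral_comp_sub_right (fun s => w' s) η]
      refine (intervalIntegral.integral_eq_sub_of_hasDerivAt (fun s _ => hw_deriv s) ?_).symm
      rw [intervalIntegrable_iff]
      haveI : IsFiniteMeasure (volume.restrict (Set.uIoc (a - η) (b - η))) :=
        ⟨by rw [Measure.restrict_apply_univ]; exact measure_Ioc_lt_top⟩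
      exact memLp_one_iff_integrable.mp
        ((hw'_L2.restrict _).mono_exponent one_le_two)
    set ν := volume.restrict (Ioc a b) with hν
    haveI : IsFiniteMeasure ν :=
      ⟨by rw [hν, Measure.restrict_apply_univ]; exact measure_Ioc_lt_top⟩
    have hprod : Integrable (Function.uncurry fun η s => w' (s - η) * g η)
        ((volume : Measure ℝ).prod ν) := by
      have hmeasprod : AEStronglyMeasurable (Function.uncurry fun η s => w' (s - η) * g η)
          ((volume : Measure ℝ).prod ν) := by
        apply AEStronglyMeasurable.mul
        · exact (hw'_meas.comp (measurable_snd.sub measurable_fst)).aestronglyMeasurable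
        · exact hg_L2.1.comp_fst
      rw [integrable_prod_iff' hmeasprod]
      constructor
      · refine Eventually.of_forall fun s => ?_
        exact hint' s
      · have hbd : ∀ s : ℝ, ‖∫ η, ‖w' (s - η) * g η‖‖ ≤ B' := by
          intro s
          rw [Real.norm_of_nonneg (integral_nonneg fun η => norm_nonneg _)]
          calc ∫ η, ‖w' (s - η) * g η‖
              ≤ (eLpNorm (fun η => w' (s - η)) 2 volume).toReal
                * (eLpNorm g 2 volume).toReal :=
                integral_norm_mul_le (memLp_translate hw'_L2 s) hg_L2
            _ = B' := by rw [hB', eLpNorm_translate hw'_meas.aestronglyMeasurable s]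
        refine Integrable.mono' (integrable_const B') ?_ (Eventually.of_forall hbd)
        exact hmeasprod.prod_swap.norm.integral_prod_right'
    calc Fw b - Fw a = ∫ η, (w (b - η) - w (a - η)) * g η := by
          rw [hFw]
          simp only
          rw [← integral_sub (hintw b) (hintw a)]
          congr 1; funext η; ring
      _ = ∫ η, (∫ s in a..b, w' (s - η)) * g η := by
          congr 1; funext η; rw [hptw η]
      _ = ∫ η, ∫ s in Ioc a b, w' (s - η) * g η := by
          congr 1; funext η
          rw [intervalIntegral.integral_of_le hab, ← integral_mul_const]
      _ = ∫ s in Ioc a b, ∫ η, w' (s - η) * g η := integral_integral_swap hprod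
      _ = ∫ s in a..b, G s := by rw [intervalIntegral.integral_of_le hab]
  have hrep : ∀ x : ℝ, Fw x = Fw 0 + ∫ s in (0:ℝ)..x, G s := by
    intro x
    rcases le_total 0 x with hx | hx
    · have := hrep_le 0 x hx
      linear_combination this
    · have := hrep_le x 0 hx
      have h2 : ∫ s in (0:ℝ)..x, G s = -∫ s in x..(0:ℝ), G s :=
        (intervalIntegral.integral_symm _ _)
      rw [h2]; linear_combination -this
  have hFw_deriv : ∀ x : ℝ, HasDerivAt Fw (G x) x := by
    intro x
    have h1 : HasDerivAt (fun y => Fw 0 + ∫ s in (0:ℝ)..y, G s) (G x) x := by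
      refine HasDerivAt.const_add _ ?_
      exact intervalIntegral.integral_hasDerivAt_right (hGcont.intervalIntegrable 0 x)
        hGcont.stronglyMeasurable.stronglyMeasurableAtFilter hGcont.continuousAt
    have heqFw : Fw = fun y => Fw 0 + ∫ s in (0:ℝ)..y, G s := funext hrep
    rw [heqFw]; exact h1
  have hne : ∀ x : ℝ, 0 < x → ((x:ℂ) - (lam:ℂ)) ≠ 0 := by
    intro x hx
    rw [sub_ne_zero]
    intro hcontra
    have : x = lam := by exact_mod_cast hcontra
    linarith
  refine ⟨fun ξ => (c * G ξ - g ξ) / ((ξ:ℂ) - (lam:ℂ)), ?_, ?_⟩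
  · intro ξ hξ
    have hξ0 : (0:ℝ) < ξ := hξ
    have hξne := hne ξ hξ0
    have hq : HasDerivAt (fun x : ℝ => c * Fw x / ((x:ℂ) - (lam:ℂ)))
        ((c * G ξ - g ξ) / ((ξ:ℂ) - (lam:ℂ))) ξ := by
      have hnum : HasDerivAt (fun x : ℝ => c * Fw x) (c * G ξ) ξ :=
        (hFw_deriv ξ).const_mul c
      have hden : HasDerivAt (fun x : ℝ => ((x:ℂ) - (lam:ℂ))) 1 ξ := by
        simpa using (Complex.ofRealCLM.hasDerivAt (x := ξ)).sub_const (lam:ℂ)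
      have hdiv := hnum.div hden hξne
      convert hdiv using 1
      rfl
      rfl
      have hFeq : c * Fw ξ = ((ξ:ℂ) - (lam:ℂ)) * g ξ := (heigen ξ hξ).symm
      rw [mul_one, hFeq]
      field_simp
    have heq : g =ᶠ[𝓝 ξ] fun x : ℝ => c * Fw x / ((x:ℂ) - (lam:ℂ)) := by
      filter_upwards [isOpen_Ioi.mem_nhds hξ] with x hx
      have hx0 : (0:ℝ) < x := hx
      have hxe := hne x hx0
      have hthis : ((x:ℂ) - (lam:ℂ)) * g x = c * Fw x := heigen x hx
      rw [eq_div_iff hxe]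
      linear_combination hthis
    exact hq.congr_of_eventuallyEq heq
  · -- L² bound
    have hsplit : (fun ξ : ℝ => (c * G ξ - g ξ) / ((ξ:ℂ) - (lam:ℂ)))
        = fun ξ : ℝ => c * G ξ / ((ξ:ℂ) - (lam:ℂ)) - g ξ / ((ξ:ℂ) - (lam:ℂ)) := by
      funext ξ; rw [sub_div]
    rw [hsplit]
    have hmeasinv : Measurable (fun ξ : ℝ => ((ξ:ℂ) - (lam:ℂ))⁻¹) :=
      ((Complex.measurable_ofReal.sub measurable_const).inv)
    -- base : MemLp of (ξ - lam)⁻¹ on Ioi 0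
    have hbase : MemLp (fun ξ : ℝ => ((ξ:ℂ) - (lam:ℂ))⁻¹) 2 (volume.restrict (Ioi 0)) := by
      rw [memLp_two_iff_integrable_sq_norm hmeasinv.aestronglyMeasurable]
      have hpres : MeasurePreserving (fun x : ℝ => x + -lam)
          (volume.restrict (Ioi (0:ℝ))) (volume.restrict (Ioi (-lam))) := by
        have h1 := (measurePreserving_add_right volume (-lam)).restrict_preimage
          (s := Ioi (-lam)) measurableSet_Ioi
        have h2 : (fun x : ℝ => x + -lam) ⁻¹' (Ioi (-lam)) = Ioi 0 := by
          ext x; simp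
        rwa [h2] at h1
      have hbig : Integrable (fun t : ℝ => t ^ (-2 : ℝ)) (volume.restrict (Ioi (-lam))) :=
        integrableOn_Ioi_rpow_of_lt (by norm_num) (by linarith)
      have hcomp := (hpres.integrable_comp hbig.1).mpr hbig
      refine hcomp.congr ?_
      filter_upwards [ae_restrict_mem measurableSet_Ioi] with ξ hξ
      have hξlam : (0:ℝ) < ξ - lam := by
        have : (0:ℝ) < ξ := hξ
        linarith
      have h1 : ‖((ξ:ℂ) - (lam:ℂ))⁻¹‖ = (ξ - lam)⁻¹ := by
        rw [norm_inv]
        congr 1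
        rw [← Complex.ofReal_sub, Complex.norm_real, Real.norm_of_nonneg hξlam.le]
      simp only [Function.comp]
      rw [h1]
      rw [show ξ + -lam = ξ - lam from by ring, Real.rpow_neg hξlam.le,
        show (2:ℝ) = ((2:ℕ):ℝ) from by norm_num, Real.rpow_natCast, ← inv_pow]
    have ht1 : MemLp (fun ξ : ℝ => c * G ξ / ((ξ:ℂ) - (lam:ℂ))) 2
        (volume.restrict (Ioi 0)) := by
      refine MemLp.of_le_mul (c := ‖c‖ * B') hbase ?_ ?_
      · exact ((hGcont.measurable.const_mul c).mul hmeasinv).aestronglyMeasurable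
      · refine Eventually.of_forall fun ξ => ?_
        rw [div_eq_mul_inv, norm_mul, norm_mul]
        have : ‖c‖ * ‖G ξ‖ ≤ ‖c‖ * B' := by
          have := hGbound ξ
          gcongr
        calc ‖c‖ * ‖G ξ‖ * ‖((ξ:ℂ) - (lam:ℂ))⁻¹‖
            ≤ ‖c‖ * B' * ‖((ξ:ℂ) - (lam:ℂ))⁻¹‖ := by gcongr
          _ = _ := rfl
    have ht2 : MemLp (fun ξ : ℝ => g ξ / ((ξ:ℂ) - (lam:ℂ))) 2 (volume.restrict (Ioi 0)) := by
      refine MemLp.of_le_mul (c := (-lam)⁻¹) (hg_L2.restrict (Ioi 0)) ?_ ?_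
      · exact ((hg_L2.restrict (Ioi 0)).1.mul hmeasinv.aestronglyMeasurable).congr
          (Eventually.of_forall fun ξ => (div_eq_mul_inv _ _).symm)
      · filter_upwards [ae_restrict_mem measurableSet_Ioi] with ξ hξ
        have hξ0 : (0:ℝ) < ξ := hξ
        have hξlam : (0:ℝ) < ξ - lam := by linarith
        rw [norm_div]
        have hnorm : ‖(ξ:ℂ) - (lam:ℂ)‖ = ξ - lam := by
          rw [← Complex.ofReal_sub, Complex.norm_real, Real.norm_of_nonneg hξlam.le]
        rw [hnorm, div_eq_mul_inv, mul_comm]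
        have hle : (ξ - lam)⁻¹ ≤ (-lam)⁻¹ := by
          apply inv_anti₀ (neg_pos.mpr hlam) (by linarith)
        exact mul_le_mul_of_nonneg_right hle (norm_nonneg _)
    exact ht1.sub ht2
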